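/- Let k be a field, n ≥ 1, and let f₁, …, fₙ ∈ k[x₁, …, xₙ] be polynomials such that for each i with 1 ≤ i ≤ n there exists a natural number dᵢ with xᵢ^{dᵢ} ∈ (f₁, …, fₙ). Let m = (x₁, …, xₙ) denote the maximal ideal generated by the variables, and let k[x₁, …, xₙ]_m denote the localization of the polynomial ring at the prime ideal m. Then the quotient of k[x₁, …, xₙ]_m by the ideal generated by the images of f₁, …, fₙ is a finite-dimensional k-vector space. -/

import Mathlib

open MvPolynomial

lemma spanRangeX_eq_ker (k : Type*) [Field k] (n : ℕ) :
    Ideal.span (Set.range (X : Fin n → MvPolynomial (Fin n) k)) =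
      RingHom.ker (constantCoeff : MvPolynomial (Fin n) k →+* k) := by
  ext p
  rw [RingHom.mem_ker, ← Set.image_univ, mem_ideal_span_X_image]
  constructor
  · intro h
    rw [constantCoeff_eq]
    by_contra hc
    obtain ⟨i, -, hi⟩ := h 0 (by simpa [MvPolynomial.mem_support_iff] using hc)
    simp at hi
  · intro h m hm
    rcases eq_or_ne m 0 with rfl | hm0
    · exact absurd (by simpa [constantCoeff_eq, MvPolynomial.mem_support_iff] using hm)
        (not_not.mpr h)
    · obtain ⟨i, hi⟩ := Finsupp.ne_iff.mp hm0
      exact ⟨i, Set.mem_univ i, by simpa using hi⟩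


/-- The ideal `(x₁, …, xₙ)` generated by the variables is prime (it is the kernel of the
constant-coefficient map to the field `k`). -/
instance spanRangeX_isPrime (k : Type*) [Field k] (n : ℕ) :
    (Ideal.span (Set.range (X : Fin n → MvPolynomial (Fin n) k))).IsPrime := by
  have h : Ideal.span (Set.range (X : Fin n → MvPolynomial (Fin n) k)) =
      RingHom.ker (constantCoeff : MvPolynomial (Fin n) k →+* k) := by
    ext p
    rw [RingHom.mem_ker, ← Set.image_univ, mem_ideal_span_X_image]
    constructor
    · intro h
      rw [constantCoeff_eq]
      by_contra hc
      obtain ⟨i, -, hi⟩ := h 0 (by simpa [MvPolynomial.mem_support_iff] using hc)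
      simp at hi
    · intro h m hm
      rcases eq_or_ne m 0 with rfl | hm0
      · exact absurd (by simpa [constantCoeff_eq, MvPolynomial.mem_support_iff] using hm)
          (not_not.mpr h)
      · obtain ⟨i, hi⟩ := Finsupp.ne_iff.mp hm0
        exact ⟨i, Set.mem_univ i, by simpa using hi⟩
  rw [h]
  exact RingHom.ker_isPrime _

set_option maxHeartbeats 1000000 in
/-- If for each `i` some power `xᵢ^{dᵢ}` lies in `(f₁, …, fₙ)`, then the
quotient of the localization `k[x₁, …, xₙ]_{(x₁, …, xₙ)}` by the ideal generated by the
images of the `fⱼ` is a finite-dimensional `k`-vector space. -/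
theorem finiteDimensional_localization_quotient_of_pow_X_mem_span
    {k : Type*} [Field k] (n : ℕ) (hn : 1 ≤ n)
    (f : Fin n → MvPolynomial (Fin n) k)
    (hf : ∀ i : Fin n, ∃ d : ℕ,
      (X i : MvPolynomial (Fin n) k) ^ d ∈ Ideal.span (Set.range f)) :
    FiniteDimensional k
      (Localization.AtPrime
          (Ideal.span (Set.range (X : Fin n → MvPolynomial (Fin n) k))) ⧸
        Ideal.span (Set.range fun j => algebraMap (MvPolynomial (Fin n) k)
          (Localization.AtPrime
            (Ideal.span (Set.range (X : Fin n → MvPolynomial (Fin n) k)))) (f j))) := by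
  classical
  choose d hd using hf
  set m : Ideal (MvPolynomial (Fin n) k) :=
    Ideal.span (Set.range (X : Fin n → MvPolynomial (Fin n) k)) with hm
  set I : Ideal (Localization.AtPrime m) :=
    Ideal.span (Set.range fun j =>
      algebraMap (MvPolynomial (Fin n) k) (Localization.AtPrime m) (f j)) with hIdef
  have hIm : I = Ideal.map (algebraMap (MvPolynomial (Fin n) k) (Localization.AtPrime m))
      (Ideal.span (Set.range f)) := by
    rw [hIdef, Ideal.map_span, ← Set.range_comp]
    rfl
  set J : Ideal (MvPolynomial (Fin n) k) :=
    I.comap (algebraMap (MvPolynomial (Fin n) k) (Localization.AtPrime m)) with hJdef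
  have hJ : ∀ i, (X i : MvPolynomial (Fin n) k) ^ d i ∈ J := fun i => by
    rw [hJdef, Ideal.mem_comap, hIm]
    exact Ideal.mem_map_of_mem _ (hd i)
  set φ : MvPolynomial (Fin n) k →ₐ[k] (Localization.AtPrime m ⧸ I) :=
    (Ideal.Quotient.mkₐ k I).comp
      (IsScalarTower.toAlgHom k (MvPolynomial (Fin n) k) (Localization.AtPrime m)) with hφ
  have hφker : ∀ p, p ∈ J → φ p = 0 := fun p hp =>
    Ideal.Quotient.eq_zero_iff_mem.mpr hp
  -- every element of the prime complement becomes a unit mod J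
  have hunit : ∀ s : m.primeCompl, IsUnit (Ideal.Quotient.mk J (s : MvPolynomial (Fin n) k)) := by
    rintro ⟨s, hs⟩
    by_contra hns
    obtain ⟨M, hM, hsM⟩ := exists_max_ideal_of_mem_nonunits hns
    set P := M.comap (Ideal.Quotient.mk J) with hP
    haveI hPprime : P.IsPrime := Ideal.IsPrime.comap _
    have hJP : J ≤ P := fun x hx => by
      show Ideal.Quotient.mk J x ∈ M
      rw [Ideal.Quotient.eq_zero_iff_mem.mpr hx]
      exact M.zero_mem
    have hXP : ∀ i, (X i : MvPolynomial (Fin n) k) ∈ P := fun i =>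
      hPprime.mem_of_pow_mem _ (hJP (hJ i))
    have hmP : m ≤ P := by
      rw [hm, Ideal.span_le]
      rintro _ ⟨i, rfl⟩
      exact hXP i
    have hsP : s ∈ P := hsM
    have hc : constantCoeff s ≠ 0 := by
      intro h0
      exact hs (by rw [hm, spanRangeX_eq_ker]; exact h0)
    have h1 : s - C (constantCoeff s) ∈ m := by
      rw [hm, spanRangeX_eq_ker]
      simp [RingHom.mem_ker]
    have h2 : (C (constantCoeff s) : MvPolynomial (Fin n) k) ∈ P := by
      have := P.sub_mem hsP (hmP h1)
      simpa using this
    exact hPprime.ne_top (P.eq_top_of_isUnit_mem h2 (hc.isUnit.map C))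
  have hsurj : Function.Surjective φ := by
    intro q
    obtain ⟨z, rfl⟩ := Ideal.Quotient.mk_surjective q
    obtain ⟨⟨p, s⟩, rfl⟩ := IsLocalization.mk'_surjective m.primeCompl z
    obtain ⟨b, hb⟩ := (hunit s).exists_right_inv
    obtain ⟨t, rfl⟩ := Ideal.Quotient.mk_surjective b
    refine ⟨p * t, ?_⟩
    have hst : (s : MvPolynomial (Fin n) k) * t - 1 ∈ J := by
      rw [← Ideal.Quotient.eq_zero_iff_mem, map_sub, map_mul, hb, map_one, sub_self]
    have key : (algebraMap (MvPolynomial (Fin n) k) (Localization.AtPrime m)) (p * t) -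
        IsLocalization.mk' (Localization.AtPrime m) p s
        = IsLocalization.mk' (Localization.AtPrime m) p s *
          (algebraMap (MvPolynomial (Fin n) k) (Localization.AtPrime m)
            ((s : MvPolynomial (Fin n) k) * t - 1)) := by
      simp only [map_sub, map_mul, map_one]
      rw [mul_sub, mul_one, ← mul_assoc, IsLocalization.mk'_spec]
    have hφpt : φ (p * t) = Ideal.Quotient.mk I
        ((algebraMap (MvPolynomial (Fin n) k) (Localization.AtPrime m)) (p * t)) := rfl
    rw [hφpt, Ideal.Quotient.eq, key]
    exact I.mul_mem_left _ hst
  -- spanning set of monomials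
  set B : Set (Fin n →₀ ℕ) :=
    Finsupp.equivFunOnFinite ⁻¹' (Set.pi Set.univ fun i => Set.Iio (d i)) with hB
  have hBfin : B.Finite :=
    Set.Finite.preimage Finsupp.equivFunOnFinite.injective.injOn
      (Set.Finite.pi fun i => Set.finite_Iio (d i))
  set S : Set (Localization.AtPrime m ⧸ I) :=
    ⇑φ '' ((fun v => (monomial v (1 : k) : MvPolynomial (Fin n) k)) '' B) with hS
  have hSfin : S.Finite := (hBfin.image _).image _
  have hspan : Submodule.span k S = ⊤ := by
    rw [eq_top_iff]
    rintro q -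
    obtain ⟨r, rfl⟩ := hsurj q
    rw [← r.support_sum_monomial_coeff, map_sum]
    apply Submodule.sum_mem
    intro v _
    have hsm : (monomial v) (coeff v r) = (coeff v r) • (monomial v (1 : k)) := by
      rw [MvPolynomial.smul_monomial, smul_eq_mul, mul_one]
    rw [hsm, map_smul]
    apply Submodule.smul_mem
    by_cases hvB : v ∈ B
    · exact Submodule.subset_span ⟨_, ⟨v, hvB, rfl⟩, rfl⟩
    · have hz : φ (monomial v 1) = 0 := by
        apply hφker
        have : ∃ i, ¬ v i < d i := by
          by_contra hcon
          push_neg at hcon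
          exact hvB (fun i _ => hcon i)
        obtain ⟨i, hi⟩ := this
        have hle : d i ≤ v i := le_of_not_gt hi
        have hmono : (monomial v (1 : k) : MvPolynomial (Fin n) k) =
            X i ^ d i * monomial (v - Finsupp.single i (d i)) 1 := by
          rw [X_pow_eq_monomial, monomial_mul, one_mul,
            add_tsub_cancel_of_le (Finsupp.single_le_iff.mpr hle)]
        rw [hmono]
        exact J.mul_mem_right _ (hJ i)
      rw [hz]
      exact Submodule.zero_mem _
  exact ⟨Submodule.fg_def.mpr ⟨S, hSfin, hspan⟩⟩
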